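/- Let A be n×n, B n×m, α k×k, β k×m complex matrices such that A has spectral radius < 1, α has spectral radius ≤ 1, the pair (A,B) is controllable and the pair (α,β) is controllable. Then for every z ∈ ℂ, the block matrix [[zA − I, 0, B],[0, zI − α, β]] has full row rank n + k. -/

import Mathlib

open Matrix

private lemma vecMul_smulMat {p q : ℕ} (x : Fin p → ℂ) (z : ℂ) (A : Matrix (Fin p) (Fin q) ℂ) :
    x ᵥ* (z • A) = z • (x ᵥ* A) := by
  ext j
  simp [Matrix.vecMul, dotProduct, Finset.mul_sum, mul_left_comm]

private lemma rank_eq_card_iff_inj {l o : Type*} [Fintype l] [Fintype o] [DecidableEq l]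
    (M : Matrix l o ℂ) :
    M.rank = Fintype.card l ↔ Function.Injective M.vecMulLinear := by
  have h1 : Mᵀ.mulVecLin = M.vecMulLinear := by
    ext x i
    simp [Matrix.mulVec_transpose]
  rw [← Matrix.rank_transpose, Matrix.rank, h1]
  constructor
  · intro h
    rw [← LinearMap.ker_eq_bot, ← Submodule.finrank_eq_zero (R := ℂ)]
    have := LinearMap.finrank_range_add_finrank_ker M.vecMulLinear
    rw [h, Module.finrank_fintype_fun_eq_card] at this
    omega
  · intro h
    have := LinearMap.finrank_range_add_finrank_ker M.vecMulLinear
    rw [LinearMap.ker_eq_bot.mpr h, finrank_bot, Module.finrank_fintype_fun_eq_card] at this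
    omega

/-- PBH-type lemma: a left eigenvector killing B kills the controllability matrix. -/
private lemma ctrl_zero {p q : ℕ} (M : Matrix (Fin p) (Fin p) ℂ) (B : Matrix (Fin p) (Fin q) ℂ)
    (hrank : (Matrix.of fun (i : Fin p) (jl : Fin p × Fin q) =>
        (M ^ (jl.1 : ℕ) * B) i jl.2).rank = p)
    (x : Fin p → ℂ) (c : ℂ) (hx : x ᵥ* M = c • x) (hxB : x ᵥ* B = 0) : x = 0 := by
  set C : Matrix (Fin p) (Fin p × Fin q) ℂ :=
    Matrix.of fun (i : Fin p) (jl : Fin p × Fin q) => (M ^ (jl.1 : ℕ) * B) i jl.2 with hC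
  have hinj : Function.Injective C.vecMulLinear := by
    rw [← rank_eq_card_iff_inj]
    simpa using hrank
  have hpow : ∀ j : ℕ, x ᵥ* (M ^ j) = c ^ j • x := by
    intro j
    induction j with
    | zero => simp [Matrix.vecMul_one]
    | succ j ih =>
      rw [pow_succ, ← Matrix.vecMul_vecMul, ih, Matrix.smul_vecMul, hx, smul_smul, pow_succ]
  have hxC : x ᵥ* C = 0 := by
    ext jl
    have : x ᵥ* (M ^ (jl.1 : ℕ) * B) = 0 := by
      rw [← Matrix.vecMul_vecMul, hpow, Matrix.smul_vecMul, hxB, smul_zero]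
    have h2 : (x ᵥ* C) jl = (x ᵥ* (M ^ (jl.1 : ℕ) * B)) jl.2 := by
      simp [Matrix.vecMul, dotProduct, hC]
    rw [h2, this]
    rfl
  have := hinj (a₁ := x) (a₂ := 0) (by simpa using hxC)
  exact this

private lemma left_eig_mem_spectrum {p : ℕ} (M : Matrix (Fin p) (Fin p) ℂ) (x : Fin p → ℂ)
    (c : ℂ) (hx : x ≠ 0) (h : x ᵥ* M = c • x) : c ∈ spectrum ℂ M := by
  rw [spectrum.mem_iff]
  intro hU
  apply hx
  have hker : x ᵥ* (algebraMap ℂ (Matrix (Fin p) (Fin p) ℂ) c - M) = 0 := by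
    rw [Algebra.algebraMap_eq_smul_one, Matrix.vecMul_sub, vecMul_smulMat,
      Matrix.vecMul_one, h, sub_self]
  obtain ⟨u, hu⟩ := hU
  calc x = x ᵥ* ((algebraMap ℂ (Matrix (Fin p) (Fin p) ℂ) c - M) * ↑u⁻¹) := by
        rw [← hu, Units.mul_inv, Matrix.vecMul_one]
    _ = 0 := by rw [← Matrix.vecMul_vecMul, hker, Matrix.zero_vecMul]

theorem stmt_11 (n k m : ℕ)
    (A : Matrix (Fin n) (Fin n) ℂ) (B : Matrix (Fin n) (Fin m) ℂ)
    (α : Matrix (Fin k) (Fin k) ℂ) (β : Matrix (Fin k) (Fin m) ℂ)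
    (hA : ∀ μ ∈ spectrum ℂ A, ‖μ‖ < 1)
    (hα : ∀ μ ∈ spectrum ℂ α, ‖μ‖ ≤ 1)
    (hAB : (Matrix.of fun (i : Fin n) (jl : Fin n × Fin m) =>
        (A ^ (jl.1 : ℕ) * B) i jl.2).rank = n)
    (hαβ : (Matrix.of fun (i : Fin k) (jl : Fin k × Fin m) =>
        (α ^ (jl.1 : ℕ) * β) i jl.2).rank = k)
    (z : ℂ) :
    (Matrix.fromCols
        (Matrix.fromBlocks (z • A - 1) 0 0 (z • (1 : Matrix (Fin k) (Fin k) ℂ) - α))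
        (Matrix.fromRows B β)).rank = n + k := by
  set M := Matrix.fromCols
      (Matrix.fromBlocks (z • A - 1) 0 0 (z • (1 : Matrix (Fin k) (Fin k) ℂ) - α))
      (Matrix.fromRows B β) with hM
  have hcard : Fintype.card (Fin n ⊕ Fin k) = n + k := by simp
  rw [← hcard, rank_eq_card_iff_inj, ← LinearMap.ker_eq_bot, LinearMap.ker_eq_bot']
  intro x hx
  rw [Matrix.vecMulLinear_apply] at hx
  set u : Fin n → ℂ := x ∘ Sum.inl with hu_def
  set v : Fin k → ℂ := x ∘ Sum.inr with hv_def
  have hx' : x ᵥ* M = Sum.elim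
      (Sum.elim (u ᵥ* (z • A - 1) + v ᵥ* 0) (u ᵥ* 0 + v ᵥ* (z • (1 : Matrix (Fin k) (Fin k) ℂ) - α)))
      (u ᵥ* B + v ᵥ* β) := by
    have hxe : x = Sum.elim u v := by ext (i | i) <;> rfl
    rw [hM, Matrix.vecMul_fromCols, Matrix.vecMul_fromBlocks, hxe,
      Matrix.sumElim_vecMul_fromRows]
    simp
  rw [hx] at hx'
  have h1 : u ᵥ* (z • A - 1) = 0 := by
    ext j; have := congrFun hx'.symm (Sum.inl (Sum.inl j)); simpa using this
  have h2 : v ᵥ* (z • (1 : Matrix (Fin k) (Fin k) ℂ) - α) = 0 := by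
    ext j; have := congrFun hx'.symm (Sum.inl (Sum.inr j)); simpa using this
  have h3 : u ᵥ* B + v ᵥ* β = 0 := by
    ext j; have := congrFun hx'.symm (Sum.inr j); simpa using this
  -- rewrite h1, h2 as eigen relations
  have h1' : z • (u ᵥ* A) = u := by
    rw [Matrix.vecMul_sub, vecMul_smulMat, Matrix.vecMul_one, sub_eq_zero] at h1
    exact h1
  have h2' : v ᵥ* α = z • v := by
    rw [Matrix.vecMul_sub, vecMul_smulMat, Matrix.vecMul_one, sub_eq_zero] at h2
    exact h2.symm
  have hxeq : ∀ (hu0 : u = 0) (hv0 : v = 0), x = 0 := by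
    intro hu0 hv0
    ext (i | i)
    · exact congrFun hu0 i
    · exact congrFun hv0 i
  by_cases hu0 : u = 0
  · -- then v β = 0, eigenrelation on v kills v
    have hvβ : v ᵥ* β = 0 := by rwa [hu0, Matrix.zero_vecMul, zero_add] at h3
    exact hxeq hu0 (ctrl_zero α β hαβ v z h2' hvβ)
  · -- u ≠ 0 : then z ≠ 0 and 1/z ∈ spectrum A so ‖z‖ > 1
    have hz : z ≠ 0 := by
      intro hz0
      apply hu0
      rw [hz0, zero_smul] at h1'
      exact h1'.symm
    have huA : u ᵥ* A = z⁻¹ • u := by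
      calc u ᵥ* A = z⁻¹ • (z • (u ᵥ* A)) := by rw [smul_smul, inv_mul_cancel₀ hz, one_smul]
        _ = z⁻¹ • u := by rw [h1']
    have hspecA : z⁻¹ ∈ spectrum ℂ A := left_eig_mem_spectrum A u z⁻¹ hu0 huA
    have hnorm : 1 < ‖z‖ := by
      have := hA z⁻¹ hspecA
      rw [norm_inv] at this
      have hzpos : 0 < ‖z‖ := norm_pos_iff.mpr hz
      have h1z : ‖z‖⁻¹ * ‖z‖ = 1 := inv_mul_cancel₀ (ne_of_gt hzpos)
      nlinarith
    have hv0 : v = 0 := by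
      by_contra hv0
      have hspecα : z ∈ spectrum ℂ α := left_eig_mem_spectrum α v z hv0 h2'
      have := hα z hspecα
      linarith
    have huB : u ᵥ* B = 0 := by rwa [hv0, Matrix.zero_vecMul, add_zero] at h3
    exact absurd (ctrl_zero A B hAB u z⁻¹ huA huB) hu0
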